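/- Let C be a category with terminal object and Γ = Hom(⊤, −) : C → Set the global sections functor. In the gluing category Gl(Γ), if C is cartesian closed, then for objects (C, Φ) and (D, Ψ) viewed as proof-relevant predicates on global points, the exponential exists and is given by (C^D, Ξ) where Ξ(f) = ∏_{d : Hom(⊤,D)} Ψ(d) → Φ(ε∘⟨f,d⟩), with ε the evaluation map. -/

import Mathlib

open CategoryTheory CategoryTheory.Limits

universe v₁ v₂ u₁ u₂

/-- An object of the Artin gluing of `F : C ⥤ D`: a triple of an object of `C`, an
object of `D`, and a morphism `fib ⟶ F.obj base`. -/
structure GlObj {C : Type u₁} {D : Type u₂} [Category.{v₁} C] [Category.{v₂} D]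
    (F : C ⥤ D) where
  base : C
  fib : D
  hom : fib ⟶ F.obj base

/-- A morphism of the Artin gluing: a commuting square. -/
@[ext]
structure GlHom {C : Type u₁} {D : Type u₂} [Category.{v₁} C] [Category.{v₂} D]
    {F : C ⥤ D} (X Y : GlObj F) where
  base : X.base ⟶ Y.base
  fib : X.fib ⟶ Y.fib
  comm : fib ≫ Y.hom = X.hom ≫ F.map base

variable {C : Type u₁} {D : Type u₂} [Category.{v₁} C] [Category.{v₂} D]

instance (F : C ⥤ D) : Category (GlObj F) where
  Hom X Y := GlHom X Y
  id X := ⟨𝟙 _, 𝟙 _, by simp⟩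
  comp f g := ⟨f.base ≫ g.base, f.fib ≫ g.fib, by
    rw [Category.assoc, g.comm, ← Category.assoc, f.comm, Category.assoc, ← Functor.map_comp]⟩
  id_comp f := by apply GlHom.ext <;> simp
  comp_id f := by apply GlHom.ext <;> simp
  assoc f g h := by apply GlHom.ext <;> simp

/-- The first projection of the Artin gluing. -/
def glPi0 (F : C ⥤ D) : GlObj F ⥤ C where
  obj X := X.base
  map f := f.base
  map_id _ := rfl
  map_comp _ _ := rfl

/-- The second projection of the Artin gluing. -/
def glPi1 (F : C ⥤ D) : GlObj F ⥤ D where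
  obj X := X.fib
  map f := f.fib
  map_id _ := rfl
  map_comp _ _ := rfl


universe u

open MonoidalCategory

variable {C : Type u₁} [Category.{v₁} C] [CartesianMonoidalCategory C] [MonoidalClosed C]

/-- The global sections functor `Γ = Hom(⊤, -) : C ⥤ Type`. -/
noncomputable def pts (C : Type u₁) [Category.{v₁} C] [CartesianMonoidalCategory C] : C ⥤ Type v₁ :=
  coyoneda.obj (Opposite.op (𝟙_ C))

/-- The proof-relevant predicate on global points determined by an object of the gluing:
`Φ(c)` is the fiber of the object's structure map over the global point `c`. -/
def ptsPred (A : GlObj (pts C)) (c : 𝟙_ C ⟶ A.base) : Type v₁ :=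
  { x : A.fib // A.hom x = c }

/-- The candidate exponential `(C^D, Ξ)` of `A = (C, Φ)` by `B = (D, Ψ)` in the gluing,
where `Ξ(f) = ∏ (d : Hom(⊤,D)), Ψ(d) → Φ(ε ∘ ⟨f,d⟩)`. -/
noncomputable def expCand (A B : GlObj (pts C)) : GlObj (pts C) where
  base := (ihom B.base).obj A.base
  fib := Σ f : 𝟙_ C ⟶ (ihom B.base).obj A.base,
    ∀ d : 𝟙_ C ⟶ B.base, ptsPred B d →
      ptsPred A (CartesianMonoidalCategory.lift d f ≫ (ihom.ev B.base).app A.base)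
  hom := TypeCat.ofHom Sigma.fst

namespace GluingAux

open CartesianMonoidalCategory MonoidalClosed

section

variable {C : Type u₁} [Category.{v₁} C] [CartesianMonoidalCategory C] [MonoidalClosed C]

@[simp] lemma gl_comp_base {X Y Z : GlObj (pts C)} (f : X ⟶ Y) (g : Y ⟶ Z) :
    (f ≫ g).base = f.base ≫ g.base := rfl

@[simp] lemma gl_comp_fib {X Y Z : GlObj (pts C)} (f : X ⟶ Y) (g : Y ⟶ Z) :
    (f ≫ g).fib = f.fib ≫ g.fib := rfl

@[simp] lemma gl_id_base (X : GlObj (pts C)) : (𝟙 X : X ⟶ X).base = 𝟙 X.base := rfl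

@[simp] lemma gl_id_fib (X : GlObj (pts C)) : (𝟙 X : X ⟶ X).fib = 𝟙 X.fib := rfl

lemma comm_apply {X Y : GlObj (pts C)} (f : X ⟶ Y) (x : X.fib) :
    Y.hom (f.fib x) = X.hom x ≫ f.base := ConcreteCategory.congr_hom f.comm x

/-- The terminal object of the gluing. -/
noncomputable def glTerm : GlObj (pts C) := ⟨𝟙_ C, PUnit.{v₁ + 1}, TypeCat.ofHom (fun _ => 𝟙 _)⟩

/-- The unique map to the terminal object of the gluing. -/
noncomputable def glToTerm (X : GlObj (pts C)) : X ⟶ glTerm :=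
  ⟨toUnit _, TypeCat.ofHom (fun _ => PUnit.unit), by refine ConcreteCategory.hom_ext _ _ (fun x => ?_); exact toUnit_unique _ _⟩

noncomputable def glTermIsTerminal : IsTerminal (glTerm (C := C)) :=
  IsTerminal.ofUniqueHom glToTerm (fun X m => by
    apply GlHom.ext
    · exact toUnit_unique _ _
    · refine ConcreteCategory.hom_ext _ _ (fun x => ?_); exact Subsingleton.elim (α := PUnit.{v₁+1}) _ _)

/-- Binary products in the gluing. -/
noncomputable def glProd (A B : GlObj (pts C)) : GlObj (pts C) where
  base := A.base ⊗ B.base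
  fib := A.fib × B.fib
  hom := TypeCat.ofHom (fun (p : A.fib × B.fib) => lift (A.hom p.1) (B.hom p.2))

noncomputable def glFst (A B : GlObj (pts C)) : glProd A B ⟶ A :=
  ⟨fst _ _, TypeCat.ofHom Prod.fst, by refine ConcreteCategory.hom_ext _ _ (fun p => ?_); exact (lift_fst _ _).symm⟩

noncomputable def glSnd (A B : GlObj (pts C)) : glProd A B ⟶ B :=
  ⟨snd _ _, TypeCat.ofHom Prod.snd, by refine ConcreteCategory.hom_ext _ _ (fun p => ?_); exact (lift_snd _ _).symm⟩

noncomputable def glLift {T A B : GlObj (pts C)} (f : T ⟶ A) (g : T ⟶ B) :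
    T ⟶ glProd A B :=
  ⟨lift f.base g.base, TypeCat.ofHom (fun t => (f.fib t, g.fib t)), by
    refine ConcreteCategory.hom_ext _ _ (fun t => ?_)
    show lift (A.hom (f.fib t)) (B.hom (g.fib t)) = T.hom t ≫ lift f.base g.base
    erw [comp_lift, comm_apply, comm_apply]⟩

noncomputable def glProdCone (A B : GlObj (pts C)) : BinaryFan A B :=
  BinaryFan.mk (glFst A B) (glSnd A B)

noncomputable def glProdIsLimit (A B : GlObj (pts C)) : IsLimit (glProdCone A B) :=
  BinaryFan.isLimitMk (fun s => glLift s.fst s.snd)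
    (fun s => by
      apply GlHom.ext
      · exact lift_fst s.fst.base s.snd.base
      · rfl)
    (fun s => by
      apply GlHom.ext
      · exact lift_snd s.fst.base s.snd.base
      · rfl)
    (fun s m h1 h2 => by
      have hb1 := congrArg GlHom.base h1
      have hb2 := congrArg GlHom.base h2
      have hf1 := ConcreteCategory.congr_hom (congrArg GlHom.fib h1)
      have hf2 := ConcreteCategory.congr_hom (congrArg GlHom.fib h2)
      apply GlHom.ext
      · apply CartesianMonoidalCategory.hom_ext
        · exact hb1.trans (lift_fst s.fst.base s.snd.base).symm
        · exact hb2.trans (lift_snd s.fst.base s.snd.base).symm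
      · refine ConcreteCategory.hom_ext _ _ (fun t => ?_)
        exact Prod.ext (hf1 t) (hf2 t))

noncomputable def glCFP : CartesianMonoidalCategory (GlObj (pts C)) :=
  CartesianMonoidalCategory.ofChosenFiniteProducts ⟨asEmptyCone glTerm, glTermIsTerminal⟩
    (fun A B => ⟨glProdCone A B, glProdIsLimit A B⟩)

attribute [local instance] glCFP

lemma gl_fst_eq (A B : GlObj (pts C)) : fst A B = glFst A B := rfl
lemma gl_snd_eq (A B : GlObj (pts C)) : snd A B = glSnd A B := rfl
lemma gl_lift_eq {T A B : GlObj (pts C)} (f : T ⟶ A) (g : T ⟶ B) :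
    lift f g = glLift f g := rfl

lemma gl_wl (X : GlObj (pts C)) {Y Z : GlObj (pts C)} (f : Y ⟶ Z) :
    X ◁ f = glLift (glFst X Y) (glSnd X Y ≫ f) := by
  have : X ◁ f = lift (fst X Y) (snd X Y ≫ f) := by ext <;> simp
  rw [this, gl_lift_eq, gl_fst_eq, gl_snd_eq]
  rfl

lemma gl_wl_base (X : GlObj (pts C)) {Y Z : GlObj (pts C)} (f : Y ⟶ Z) :
    (X ◁ f).base = X.base ◁ f.base := by
  rw [gl_wl]
  show lift (fst X.base Y.base) (snd X.base Y.base ≫ f.base) = X.base ◁ f.base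
  ext <;> simp

lemma gl_wl_fib (X : GlObj (pts C)) {Y Z : GlObj (pts C)} (f : Y ⟶ Z)
    (p : (glProd X Y).fib) : (X ◁ f).fib p = (p.1, f.fib p.2) := by
  rw [gl_wl]; rfl

/-- Extensionality for fibers of the candidate exponential. -/
lemma expFibExt {A B : GlObj (pts C)} {x y : (expCand A B).fib}
    (h1 : x.1 = y.1) (h2 : ∀ d hd, (x.2 d hd).val = (y.2 d hd).val) : x = y := by
  obtain ⟨f, s⟩ := x
  obtain ⟨g, t⟩ := y
  dsimp at h1
  subst h1
  have : s = t := by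
    funext d hd
    exact Subtype.ext (h2 d hd)
  rw [this]

lemma key {Bb Yb Ab : C} (d : 𝟙_ C ⟶ Bb) (g : 𝟙_ C ⟶ Yb) (u : Bb ⊗ Yb ⟶ Ab) :
    lift d (g ≫ MonoidalClosed.curry u) ≫ (ihom.ev Bb).app Ab = lift d g ≫ u := by
  have h : lift d (g ≫ MonoidalClosed.curry u)
      = lift d g ≫ (Bb ◁ MonoidalClosed.curry u) := by ext <;> simp
  rw [h, Category.assoc, ← MonoidalClosed.uncurry_eq, MonoidalClosed.uncurry_curry]

lemma key2 {Bb Ab Ab' : C} (d : 𝟙_ C ⟶ Bb) (f : 𝟙_ C ⟶ (ihom Bb).obj Ab) (h : Ab ⟶ Ab') :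
    lift d (f ≫ (ihom Bb).map h) ≫ (ihom.ev Bb).app Ab'
      = (lift d f ≫ (ihom.ev Bb).app Ab) ≫ h := by
  have hh : lift d (f ≫ (ihom Bb).map h) = lift d f ≫ (Bb ◁ (ihom Bb).map h) := by
    ext <;> simp
  have he : MonoidalClosed.uncurry ((ihom Bb).map h) = (ihom.ev Bb).app Ab ≫ h := by
    rw [← Category.id_comp ((ihom Bb).map h), MonoidalClosed.uncurry_natural_right,
      MonoidalClosed.uncurry_id_eq_ev]
  rw [hh, Category.assoc, ← MonoidalClosed.uncurry_eq, he, ← Category.assoc]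

/-- The action of the exponential functor on morphisms. -/
noncomputable def expMap (B : GlObj (pts C)) {A A' : GlObj (pts C)} (h : A ⟶ A') :
    expCand A B ⟶ expCand A' B where
  base := (ihom B.base).map h.base
  fib := TypeCat.ofHom (fun x => ⟨x.1 ≫ (ihom B.base).map h.base, fun d hd =>
    ⟨h.fib (x.2 d hd).val, by
      rw [comm_apply h, (x.2 d hd).property, key2]⟩⟩)
  comm := rfl

/-- The exponential functor `A ↦ A^B` on the gluing. -/
noncomputable def expFunctor (B : GlObj (pts C)) : GlObj (pts C) ⥤ GlObj (pts C) where
  obj A := expCand A B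
  map h := expMap B h
  map_id A := by
    apply GlHom.ext
    · exact (ihom B.base).map_id A.base
    · refine ConcreteCategory.hom_ext _ _ (fun x => ?_)
      apply expFibExt
      · exact (congrArg (x.1 ≫ ·) ((ihom B.base).map_id A.base)).trans (Category.comp_id _)
      · intro d hd; rfl
  map_comp h k := by
    apply GlHom.ext
    · exact (ihom B.base).map_comp h.base k.base
    · refine ConcreteCategory.hom_ext _ _ (fun x => ?_)
      apply expFibExt
      · exact (congrArg (x.1 ≫ ·) ((ihom B.base).map_comp h.base k.base)).trans
          (Category.assoc _ _ _).symm
      · intro d hd; rfl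

/-- The hom-set equivalence of the exponential adjunction in the gluing. -/
noncomputable def glHomEquiv (B Y A : GlObj (pts C)) :
    (B ⊗ Y ⟶ A) ≃ (Y ⟶ expCand A B) where
  toFun u :=
    { base := MonoidalClosed.curry u.base
      fib := TypeCat.ofHom (fun y => ⟨Y.hom y ≫ MonoidalClosed.curry u.base, fun d hd =>
        ⟨u.fib (hd.val, y), by
          erw [key d (Y.hom y) u.base, comm_apply u,
            show ((B ⊗ Y : GlObj (pts C)).hom (hd.val, y))
              = lift (B.hom hd.val) (Y.hom y) from rfl, hd.property]; rfl⟩⟩)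
      comm := rfl }
  invFun v :=
    { base := MonoidalClosed.uncurry v.base
      fib := TypeCat.ofHom (fun (p : B.fib × Y.fib) => ((v.fib p.2).2 (B.hom p.1) ⟨p.1, rfl⟩).val)
      comm := by
        refine ConcreteCategory.hom_ext _ _ (fun p => ?_)
        show A.hom (((v.fib p.2).2 (B.hom p.1) ⟨p.1, rfl⟩).val)
          = (B ⊗ Y : GlObj (pts C)).hom p ≫ MonoidalClosed.uncurry v.base
        rw [((v.fib p.2).2 (B.hom p.1) ⟨p.1, rfl⟩).property]
        have hcomm : (v.fib p.2).fst = Y.hom p.2 ≫ v.base := comm_apply v p.2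
        rw [hcomm]
        calc lift (B.hom p.1) (Y.hom p.2 ≫ v.base) ≫ (ihom.ev B.base).app A.base
            = lift (B.hom p.1)
                (Y.hom p.2 ≫ MonoidalClosed.curry (MonoidalClosed.uncurry v.base)) ≫
                (ihom.ev B.base).app A.base := by erw [MonoidalClosed.curry_uncurry]; rfl
          _ = lift (B.hom p.1) (Y.hom p.2) ≫ MonoidalClosed.uncurry v.base := key _ _ _ }
  left_inv u := by
    apply GlHom.ext
    · exact MonoidalClosed.uncurry_curry u.base
    · refine ConcreteCategory.hom_ext _ _ (fun p => ?_)
      obtain ⟨b, y⟩ := p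
      rfl
  right_inv v := by
    apply GlHom.ext
    · exact MonoidalClosed.curry_uncurry v.base
    · refine ConcreteCategory.hom_ext _ _ (fun y => ?_)
      apply expFibExt
      · show Y.hom y ≫ MonoidalClosed.curry (MonoidalClosed.uncurry v.base) = (v.fib y).1
        erw [MonoidalClosed.curry_uncurry]
        exact (comm_apply v y).symm
      · intro d hd
        obtain ⟨b, hb⟩ := hd
        subst hb
        rfl

/-- The exponential adjunction in the gluing. -/
noncomputable def glAdj (B : GlObj (pts C)) : tensorLeft B ⊣ expFunctor B :=
  Adjunction.mkOfHomEquiv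
    { homEquiv := fun Y A => glHomEquiv B Y A
      homEquiv_naturality_left_symm := by
        intro Y' Y A f g
        apply GlHom.ext
        · show MonoidalClosed.uncurry ((f ≫ g).base)
            = ((B ◁ f) ≫ (glHomEquiv B Y A).symm g).base
          erw [gl_comp_base, gl_comp_base, MonoidalClosed.uncurry_natural_left, gl_wl_base]
          rfl
        · refine ConcreteCategory.hom_ext _ _ (fun p => ?_)
          show ((g.fib (f.fib p.2)).2 (B.hom p.1) ⟨p.1, rfl⟩).val
            = ((glHomEquiv B Y A).symm g).fib ((B ◁ f).fib p)
          erw [gl_wl_fib]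
          rfl
      homEquiv_naturality_right := by
        intro Y A A' u h
        apply GlHom.ext
        · exact MonoidalClosed.curry_natural_right u.base h.base
        · refine ConcreteCategory.hom_ext _ _ (fun y => ?_)
          apply expFibExt
          · show Y.hom y ≫ MonoidalClosed.curry (u.base ≫ h.base)
              = (Y.hom y ≫ MonoidalClosed.curry u.base) ≫ (ihom B.base).map h.base
            exact (congrArg (Y.hom y ≫ ·) (MonoidalClosed.curry_natural_right u.base h.base)).trans
              (Category.assoc _ _ _).symm
          · intro d hd; rfl }

noncomputable def glExp (B : GlObj (pts C)) : Closed B :=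
  ⟨expFunctor B, glAdj B⟩

noncomputable def glCC : MonoidalClosed (GlObj (pts C)) :=
  ⟨glExp⟩

end

end GluingAux

/-- If `C` is cartesian closed, the gluing category along the global sections functor is
cartesian closed, and the exponential of `(C, Φ)` by `(D, Ψ)` is given by `(C^D, Ξ)` with
`Ξ(f) = ∏ (d : Hom(⊤,D)), Ψ(d) → Φ(ε ∘ ⟨f,d⟩)`. -/
theorem gluing_exponential (A B : GlObj (pts C)) :
    ∃ (_ : CartesianMonoidalCategory (GlObj (pts C))) (_ : MonoidalClosed (GlObj (pts C))),
      Nonempty ((ihom B).obj A ≅ expCand A B) := by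
  letI i1 : CartesianMonoidalCategory (GlObj (pts C)) := GluingAux.glCFP
  letI i2 : MonoidalClosed (GlObj (pts C)) := GluingAux.glCC
  exact ⟨i1, i2, ⟨Iso.refl _⟩⟩
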